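/- Suppose there exist sequences of positive integers nᵢ, kᵢ tending to infinity such that P_η(nᵢ, kᵢ) ≤ nᵢkᵢ for all i, lim_{i→∞} (log nᵢ)/kᵢ = 0, and lim_{i→∞} (log kᵢ)/nᵢ = 0. Then h(u) = 0 for every unit vector u ∈ ℝ². -/

import Mathlib

open Filter Set

noncomputable section

/-- The plane `ℝ²`. -/
abbrev R2 := EuclideanSpace ℝ (Fin 2)

/-- The embedding of `ℤ²` into `ℝ²`. -/
def toR2 (p : ℤ × ℤ) : R2 := (WithLp.equiv 2 (Fin 2 → ℝ)).symm ![(p.1 : ℝ), (p.2 : ℝ)]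

def e1 : R2 := (WithLp.equiv 2 (Fin 2 → ℝ)).symm ![1, 0]
def e2 : R2 := (WithLp.equiv 2 (Fin 2 → ℝ)).symm ![0, 1]

variable {A : Type*}

/-- The translate `Tⁿη`. -/
def Tr (η : ℤ × ℤ → A) (n : ℤ × ℤ) : ℤ × ℤ → A := fun x => η (x + n)

/-- The number of distinct `η`-colorings of a set `S ⊆ ℤ²`. -/
def colorCount (η : ℤ × ℤ → A) (S : Set (ℤ × ℤ)) : ℕ :=
  Set.ncard {f : S → A | ∃ n : ℤ × ℤ, ∀ x : S, f x = η ((x : ℤ × ℤ) + n)}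

/-- The integer points of a subset of the plane. -/
def latticePts (K : Set R2) : Set (ℤ × ℤ) := {p | toR2 p ∈ K}

/-- The complexity `P_η(K)` for `K ⊆ ℝ²`. -/
def Pc (η : ℤ × ℤ → A) (K : Set R2) : ℕ := colorCount η (latticePts K)

/-- The rectangle complexity `P_η(n,k)`. -/
def Prect (η : ℤ × ℤ → A) (n k : ℕ) : ℕ :=
  colorCount η {p : ℤ × ℤ | 0 ≤ p.1 ∧ p.1 < (n : ℤ) ∧ 0 ≤ p.2 ∧ p.2 < (k : ℤ)}

/-- The `t`-neighborhood `[0, su]^(t)` of the segment `[0, su]`. -/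
def segNbhd (u : R2) (s t : ℝ) : Set R2 :=
  {v | ∃ w ∈ segment ℝ (0 : R2) (s • u), dist v w < t}

/-- The directional entropy `h(u)`. -/
def dirEnt (η : ℤ × ℤ → A) (u : R2) : EReal :=
  ⨆ t : Set.Ioi (0 : ℝ),
    Filter.limsup (fun s : ℝ => ((Real.log (Pc η (segNbhd u s (t : ℝ))) / s : ℝ) : EReal))
      Filter.atTop

/-- `f` agrees on `S` with some translate of `η`. -/
def IsColoring (η : ℤ × ℤ → A) (S : Set (ℤ × ℤ)) (f : ℤ × ℤ → A) : Prop :=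
  ∃ n : ℤ × ℤ, ∀ x ∈ S, f x = η (x + n)

/-- The `η`-coloring `f` of `S` extends uniquely to an `η`-coloring of `T`. -/
def ExtendsUniquely (η : ℤ × ℤ → A) (S T : Set (ℤ × ℤ)) (f : ℤ × ℤ → A) : Prop :=
  (∃ g, IsColoring η T g ∧ ∀ x ∈ S, g x = f x) ∧
    ∀ g g', IsColoring η T g → IsColoring η T g' →
      (∀ x ∈ S, g x = f x) → (∀ x ∈ S, g' x = f x) → ∀ x ∈ T, g x = g' x

/-- `S = conv(S) ∩ ℤ²`. -/
def IsLatticeConvex (S : Set (ℤ × ℤ)) : Prop :=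
  ∀ p : ℤ × ℤ, toR2 p ∈ convexHull ℝ (toR2 '' S) → p ∈ S

/-- `x` is `η`-generated by `S`. -/
def IsGenerated (η : ℤ × ℤ → A) (S : Set (ℤ × ℤ)) (x : ℤ × ℤ) : Prop :=
  ∀ f : ℤ × ℤ → A, IsColoring η (S \ {x}) f → ExtendsUniquely η (S \ {x}) S f

/-- `S` is an `η`-generating set. -/
def IsGeneratingSet (η : ℤ × ℤ → A) (S : Set (ℤ × ℤ)) : Prop :=
  S.Finite ∧ S.Nonempty ∧ IsLatticeConvex S ∧
    ∀ x ∈ S, toR2 x ∈ frontier (convexHull ℝ (toR2 '' S)) → IsGenerated η S x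

/-- For `v = (v₁, v₂)`, `perp v = (v₂, -v₁)`. -/
def perp (v : R2) : R2 := (WithLp.equiv 2 (Fin 2 → ℝ)).symm ![v 1, -(v 0)]

/-- `E_v(S)`: the integer points of the edge of `S` in direction `v`. -/
def edgeSet (v : R2) (S : Set (ℤ × ℤ)) : Set (ℤ × ℤ) :=
  {x ∈ S | ∀ y ∈ S, (inner ℝ (toR2 y) (perp v) : ℝ) ≤ inner ℝ (toR2 x) (perp v)}

/-- `x` is an endpoint of `E_v(S)`. -/
def IsEndpoint (v : R2) (S : Set (ℤ × ℤ)) (x : ℤ × ℤ) : Prop :=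
  x ∈ edgeSet v S ∧ toR2 x ∉ convexHull ℝ (toR2 '' (edgeSet v S \ {x}))

/-- `S` is `v`-balanced for `η`. -/
def IsBalanced (η : ℤ × ℤ → A) (v : R2) (S : Set (ℤ × ℤ)) : Prop :=
  S.Finite ∧ IsLatticeConvex S ∧ S ≠ edgeSet v S ∧
    (∀ x, IsEndpoint v S x → IsGenerated η S x) ∧
    colorCount η S < colorCount η (S \ edgeSet v S) + (edgeSet v S).ncard ∧
    ∀ w : R2, ({x ∈ S | ∃ c : ℝ, toR2 x = w + c • v}).Nonempty →
      (edgeSet v S).ncard ≤ ({x ∈ S | ∃ c : ℝ, toR2 x = w + c • v}).ncard + 1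

/-- `J_{T,v,S}`. -/
def Jset (v : R2) (S T : Set (ℤ × ℤ)) : Set (ℤ × ℤ) :=
  {j | ((fun x => x + j) '' S) \ T = (fun x => x + j) '' edgeSet v S}

/-- `J_{T,v,S,p}`: `J_{T,v,S}` with the `p` points nearest each endpoint removed. -/
def JsetP (v : R2) (S T : Set (ℤ × ℤ)) (p : ℕ) : Set (ℤ × ℤ) :=
  {j ∈ Jset v S T |
    p ≤ ({j' ∈ Jset v S T | (inner ℝ (toR2 j') v : ℝ) < inner ℝ (toR2 j) v}).ncard ∧
    p ≤ ({j' ∈ Jset v S T | (inner ℝ (toR2 j) v : ℝ) < inner ℝ (toR2 j') v}).ncard}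

/-- `ext¹_{v,S,p}(T)`. -/
def ext1 (v : R2) (S : Set (ℤ × ℤ)) (p : ℕ) (T : Set (ℤ × ℤ)) : Set (ℤ × ℤ) :=
  T ∪ ⋃ j ∈ JsetP v S T p, (fun x => x + j) '' S

/-- `ext^m_{v,S,p}(T)`. -/
def extN (v : R2) (S : Set (ℤ × ℤ)) (p : ℕ) (m : ℕ) (T : Set (ℤ × ℤ)) : Set (ℤ × ℤ) :=
  (ext1 v S p)^[m] T

/-- The border `∂_{v,S,p}(T)`. -/
def border (v : R2) (S : Set (ℤ × ℤ)) (p : ℕ) (T : Set (ℤ × ℤ)) : Set (ℤ × ℤ) :=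
  ⋃ j ∈ JsetP v S T p, (fun x => x + j) '' (S \ edgeSet v S)

/-- The integer points of the rectangle `[a,b] × [c,d]`. -/
def rect (a b c d : ℤ) : Set (ℤ × ℤ) := {p | a ≤ p.1 ∧ p.1 ≤ b ∧ c ≤ p.2 ∧ p.2 ≤ d}

/-- `f` is (the restriction to `T` of) an `(S,η)`-coloring. -/
def IsSColoringOf (η : ℤ × ℤ → A) (S T : Set (ℤ × ℤ)) (f : ℤ × ℤ → A) : Prop :=
  ∃ g : ℤ × ℤ → A, (∀ x ∈ T, g x = f x) ∧ ∀ j : ℤ × ℤ, IsColoring η ((fun x => x + j) '' S) g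

/-- `f|_R` extends uniquely to an `(S,η)`-coloring of `T`. -/
def ExtendsUniquelyS (η : ℤ × ℤ → A) (S R T : Set (ℤ × ℤ)) (f : ℤ × ℤ → A) : Prop :=
  (∃ g, IsSColoringOf η S T g ∧ ∀ x ∈ R, g x = f x) ∧
    ∀ g g', IsSColoringOf η S T g → IsSColoringOf η S T g' →
      (∀ x ∈ R, g x = f x) → (∀ x ∈ R, g' x = f x) → ∀ x ∈ T, g x = g' x

/-- `f` is vertically periodic on `X` with period `p`. -/
def VertPeriodicOn (f : ℤ × ℤ → A) (X : Set (ℤ × ℤ)) (p : ℤ) : Prop :=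
  ∀ q : ℤ × ℤ, q ∈ X → q + (0, p) ∈ X → f (q + (0, p)) = f q

/-- The thickness `τ_u(K)` of `K` in direction `u`. -/
def thickness (u : R2) (K : Set R2) : ℝ :=
  sSup {τ : ℝ | 0 ≤ τ ∧ ∃ n : ℤ × ℤ, (fun v => v + toR2 n) '' segment ℝ (0 : R2) (τ • u) ⊆ K}

/-- One-dimensional word complexity `P_α(n)`. -/
def wordCount (α : ℤ → A) (n : ℕ) : ℕ :=
  Set.ncard {w : Fin n → A | ∃ m : ℤ, ∀ j : Fin n, w j = α (m + (j : ℕ))}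

section Topological

variable [TopologicalSpace A]

/-- The orbit closure `X_η` in the product topology. -/
def Xeta (η : ℤ × ℤ → A) : Set (ℤ × ℤ → A) := closure {g | ∃ n : ℤ × ℤ, g = Tr η n}

/-- A line `ℓ ⊆ ℝ²` is expansive for `X_η`. -/
def IsExpansiveLine (η : ℤ × ℤ → A) (ℓ : Set R2) : Prop :=
  ∃ r > 0, ∀ x ∈ Xeta η, ∀ y ∈ Xeta η,
    (∀ n : ℤ × ℤ, Metric.infDist (toR2 n) ℓ < r → x n = y n) → x = y

/-- The line through the origin in direction `u`. -/
def lineThrough (u : R2) : Set R2 := {v | ∃ c : ℝ, v = c • u}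

open Classical in
/-- The metric `ρ` on `𝒜^{ℤ²}`. -/
def rho (x y : ℤ × ℤ → A) : ℝ :=
  if x = y then 0
  else (2 : ℝ) ^ (-(sInf {r : ℝ | ∃ m : ℤ × ℤ, x m ≠ y m ∧ ‖toR2 m‖ = r}))

/-- The covering number `N_T(E, ε)`. -/
def Ncount (η : ℤ × ℤ → A) (E : Set R2) (ε : ℝ) : ℕ :=
  sInf {c : ℕ | ∃ Y : Finset (ℤ × ℤ → A), Y.card = c ∧ ↑Y ⊆ Xeta η ∧
    ∀ x ∈ Xeta η, ∃ y ∈ Y, ∀ n : ℤ × ℤ, toR2 n ∈ E → rho (Tr x n) (Tr y n) < ε}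

end Topological

end


/-! ### Auxiliary lemmas for stmt6 -/

section Stmt6Aux

variable {A : Type*} [Fintype A] (η : ℤ × ℤ → A)

lemma colorings_finite {S : Set (ℤ × ℤ)} (hS : S.Finite) :
    {f : S → A | ∃ n : ℤ × ℤ, ∀ x : S, f x = η ((x : ℤ × ℤ) + n)}.Finite := by
  haveI := hS.to_subtype
  exact Set.toFinite _

lemma one_le_colorCount {S : Set (ℤ × ℤ)} (hS : S.Finite) : 1 ≤ colorCount η S := by
  have hne : {f : S → A | ∃ n : ℤ × ℤ, ∀ x : S, f x = η ((x : ℤ × ℤ) + n)}.Nonempty :=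
    ⟨fun x => η ((x : ℤ × ℤ) + 0), 0, fun x => rfl⟩
  exact (Set.ncard_pos (colorings_finite η hS)).2 hne

lemma colorCount_mono {S T : Set (ℤ × ℤ)} (hST : S ⊆ T) (hT : T.Finite) :
    colorCount η S ≤ colorCount η T := by
  classical
  set r : (T → A) → (S → A) := fun g x => g ⟨x.1, hST x.2⟩ with hr
  have hsub : {f : S → A | ∃ n : ℤ × ℤ, ∀ x : S, f x = η ((x : ℤ × ℤ) + n)} ⊆
      r '' {f : T → A | ∃ n : ℤ × ℤ, ∀ x : T, f x = η ((x : ℤ × ℤ) + n)} := by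
    rintro f ⟨n, hn⟩
    refine ⟨fun x => η ((x : ℤ × ℤ) + n), ⟨n, fun x => rfl⟩, ?_⟩
    funext x
    simp [hr, hn x]
  calc colorCount η S ≤ (r '' {f : T → A | ∃ n : ℤ × ℤ, ∀ x : T, f x = η ((x : ℤ × ℤ) + n)}).ncard :=
        Set.ncard_le_ncard hsub ((colorings_finite η hT).image r)
    _ ≤ colorCount η T := Set.ncard_image_le (colorings_finite η hT)

lemma ncard_prod' {α β : Type*} (s : Set α) (t : Set β) :
    (s ×ˢ t).ncard = s.ncard * t.ncard := by
  rw [← Nat.card_coe_set_eq, ← Nat.card_coe_set_eq, ← Nat.card_coe_set_eq,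
    Nat.card_congr (Equiv.Set.prod s t), Nat.card_prod]

lemma colorCount_union_le {S T : Set (ℤ × ℤ)} (hS : S.Finite) (hT : T.Finite) :
    colorCount η (S ∪ T) ≤ colorCount η S * colorCount η T := by
  classical
  set CS := {f : S → A | ∃ n : ℤ × ℤ, ∀ x : S, f x = η ((x : ℤ × ℤ) + n)}
  set CT := {f : T → A | ∃ n : ℤ × ℤ, ∀ x : T, f x = η ((x : ℤ × ℤ) + n)}
  set Φ : ((S ∪ T : Set (ℤ × ℤ)) → A) → (S → A) × (T → A) :=
    fun f => (fun x => f ⟨x.1, Or.inl x.2⟩, fun x => f ⟨x.1, Or.inr x.2⟩)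
  have hmaps : ∀ f ∈ {f : (S ∪ T : Set (ℤ × ℤ)) → A |
      ∃ n : ℤ × ℤ, ∀ x : (S ∪ T : Set (ℤ × ℤ)), f x = η ((x : ℤ × ℤ) + n)}, Φ f ∈ CS ×ˢ CT := by
    rintro f ⟨n, hn⟩
    exact ⟨⟨n, fun x => hn _⟩, ⟨n, fun x => hn _⟩⟩
  have hinj : Set.InjOn Φ {f : (S ∪ T : Set (ℤ × ℤ)) → A |
      ∃ n : ℤ × ℤ, ∀ x : (S ∪ T : Set (ℤ × ℤ)), f x = η ((x : ℤ × ℤ) + n)} := by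
    intro f _ g _ h
    funext x
    obtain ⟨x, hx⟩ := x
    rcases hx with hx | hx
    · exact congrFun (congrArg Prod.fst h) ⟨x, hx⟩
    · exact congrFun (congrArg Prod.snd h) ⟨x, hx⟩
  have := Set.ncard_le_ncard_of_injOn Φ hmaps hinj
    (((colorings_finite η hS).prod (colorings_finite η hT)))
  rw [ncard_prod'] at this
  exact this

lemma colorCount_translate_le (S : Set (ℤ × ℤ)) (j : ℤ × ℤ) (hS : S.Finite) :
    colorCount η ((fun x => x + j) '' S) ≤ colorCount η S := by
  classical
  set T := (fun x => x + j) '' S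
  set Φ : (T → A) → (S → A) := fun f x => f ⟨x.1 + j, ⟨x.1, x.2, rfl⟩⟩
  have hmaps : ∀ f ∈ {f : T → A | ∃ n : ℤ × ℤ, ∀ x : T, f x = η ((x : ℤ × ℤ) + n)},
      Φ f ∈ {f : S → A | ∃ n : ℤ × ℤ, ∀ x : S, f x = η ((x : ℤ × ℤ) + n)} := by
    rintro f ⟨n, hn⟩
    refine ⟨j + n, fun x => ?_⟩
    have := hn ⟨x.1 + j, ⟨x.1, x.2, rfl⟩⟩
    simpa [Φ, add_assoc] using this
  have hinj : Set.InjOn Φ {f : T → A | ∃ n : ℤ × ℤ, ∀ x : T, f x = η ((x : ℤ × ℤ) + n)} := by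
    intro f _ g _ h
    funext y
    obtain ⟨y, hy⟩ := y
    obtain ⟨x, hx, rfl⟩ := hy
    exact congrFun h ⟨x, hx⟩
  exact Set.ncard_le_ncard_of_injOn Φ hmaps hinj (colorings_finite η hS)

lemma colorCount_empty_le : colorCount η (∅ : Set (ℤ × ℤ)) ≤ 1 := by
  have : Subsingleton ((∅ : Set (ℤ × ℤ)) → A) := by
    constructor; intro f g; funext x; exact absurd x.2 (Set.notMem_empty _)
  calc colorCount η ∅ ≤ (Set.univ : Set ((∅ : Set (ℤ × ℤ)) → A)).ncard :=
        Set.ncard_le_ncard (Set.subset_univ _) (Set.toFinite _)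
    _ ≤ 1 := by
        rw [Set.ncard_univ]
        exact Finite.card_le_one_iff_subsingleton.mpr this

lemma colorCount_biUnion_le (W : Finset ℤ) (G : ℤ → Set (ℤ × ℤ)) (hG : ∀ w, (G w).Finite)
    (B : ℕ) (hB : ∀ w ∈ W, colorCount η (G w) ≤ B) :
    colorCount η (⋃ w ∈ W, G w) ≤ B ^ W.card := by
  classical
  induction W using Finset.induction with
  | empty => simpa using colorCount_empty_le η
  | insert _ _ hw ih =>
      rename_i a W'
      rw [Finset.set_biUnion_insert]
      calc colorCount η (G a ∪ ⋃ w ∈ W', G w) ≤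
            colorCount η (G a) * colorCount η (⋃ w ∈ W', G w) :=
            colorCount_union_le η (hG a) (Set.Finite.biUnion W'.finite_toSet (fun w _ => hG w))
        _ ≤ B * B ^ W'.card := Nat.mul_le_mul (hB a (Finset.mem_insert_self a W'))
            (ih (fun w hw' => hB w (Finset.mem_insert_of_mem hw')))
        _ = B ^ (insert a W').card := by rw [Finset.card_insert_of_notMem hw, pow_succ, mul_comm]

lemma toR2_apply0 (p : ℤ × ℤ) : toR2 p 0 = (p.1 : ℝ) := rfl
lemma toR2_apply1 (p : ℤ × ℤ) : toR2 p 1 = (p.2 : ℝ) := rfl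

lemma norm_eq_sqrt (x : R2) : ‖x‖ = Real.sqrt (x 0 ^ 2 + x 1 ^ 2) := by
  rw [EuclideanSpace.norm_eq, Fin.sum_univ_two]
  simp [sq_abs]

lemma unit_sq {u : R2} (hu : ‖u‖ = 1) : u 0 ^ 2 + u 1 ^ 2 = 1 := by
  rw [norm_eq_sqrt] at hu
  nlinarith [Real.sq_sqrt (by positivity : (0:ℝ) ≤ u 0 ^ 2 + u 1 ^ 2)]

lemma coord_le_norm (x : R2) (i : Fin 2) : |x i| ≤ ‖x‖ := by
  rw [norm_eq_sqrt]
  have h0 : |x 0| ≤ Real.sqrt (x 0 ^ 2 + x 1 ^ 2) := by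
    rw [← Real.sqrt_sq_eq_abs]; exact Real.sqrt_le_sqrt (by nlinarith [sq_nonneg (x 1)])
  have h1 : |x 1| ≤ Real.sqrt (x 0 ^ 2 + x 1 ^ 2) := by
    rw [← Real.sqrt_sq_eq_abs]; exact Real.sqrt_le_sqrt (by nlinarith [sq_nonneg (x 0)])
  fin_cases i
  · exact h0
  · exact h1

lemma proj_le_norm {u : R2} (hu : ‖u‖ = 1) (x : R2) :
    |x 0 * u 0 + x 1 * u 1| ≤ ‖x‖ := by
  have h := unit_sq hu
  rw [norm_eq_sqrt, ← Real.sqrt_sq_eq_abs]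
  exact Real.sqrt_le_sqrt (by nlinarith [sq_nonneg (x 0 * u 1 - x 1 * u 0)])

lemma strip_facts {u : R2} (hu : ‖u‖ = 1) {s t : ℝ} (hs : 0 ≤ s) {p : ℤ × ℤ}
    (hp : toR2 p ∈ segNbhd u s t) :
    -t ≤ (p.1 : ℝ) * u 0 + (p.2 : ℝ) * u 1 ∧ (p.1 : ℝ) * u 0 + (p.2 : ℝ) * u 1 ≤ s + t ∧
      |(p.1 : ℝ) - ((p.1 : ℝ) * u 0 + (p.2 : ℝ) * u 1) * u 0| ≤ 2 * t ∧
      |(p.2 : ℝ) - ((p.1 : ℝ) * u 0 + (p.2 : ℝ) * u 1) * u 1| ≤ 2 * t := by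
  obtain ⟨w, hw, hd⟩ := hp
  rw [segment_eq_image'] at hw
  obtain ⟨θ, hθ, rfl⟩ := hw
  simp only [zero_add, sub_zero, smul_smul] at hd ⊢
  set c := θ * s with hc
  have hc0 : 0 ≤ c := mul_nonneg hθ.1 hs
  have hcs : c ≤ s := by
    calc c ≤ 1 * s := by apply mul_le_mul_of_nonneg_right hθ.2 hs
      _ = s := one_mul s
  set d : R2 := toR2 p - c • u with hdd
  have hdn : ‖d‖ < t := by rw [hdd, ← dist_eq_norm]; exact hd
  have hd0 : d 0 = (p.1 : ℝ) - c * u 0 := by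
    simp [hdd, toR2_apply0]
  have hd1 : d 1 = (p.2 : ℝ) - c * u 1 := by
    simp [hdd, toR2_apply1]
  have husq := unit_sq hu
  set pr := (p.1 : ℝ) * u 0 + (p.2 : ℝ) * u 1 with hpr
  have hproj : |pr - c| < t := by
    have heq : (d 0) * u 0 + (d 1) * u 1 = pr - c := by rw [hd0, hd1]; ring_nf; nlinarith [husq]
    calc |pr - c| = |d 0 * u 0 + d 1 * u 1| := by rw [heq]
      _ ≤ ‖d‖ := proj_le_norm hu d
      _ < t := hdn
  have hu0 : |u 0| ≤ 1 := by rw [← hu]; exact coord_le_norm u 0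
  have hu1 : |u 1| ≤ 1 := by rw [← hu]; exact coord_le_norm u 1
  have habs0 : |d 0| < t := lt_of_le_of_lt (coord_le_norm d 0) hdn
  have habs1 : |d 1| < t := lt_of_le_of_lt (coord_le_norm d 1) hdn
  refine ⟨?_, ?_, ?_, ?_⟩
  · have := abs_lt.1 hproj; linarith
  · have := abs_lt.1 hproj; linarith
  · have heq2 : (p.1 : ℝ) - pr * u 0 = d 0 - (pr - c) * u 0 := by rw [hd0]; ring
    rw [heq2]
    calc |d 0 - (pr - c) * u 0| ≤ |d 0| + |(pr - c) * u 0| := abs_sub _ _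
      _ ≤ t + t * 1 := by
          refine add_le_add habs0.le ?_
          rw [abs_mul]
          exact mul_le_mul hproj.le hu0 (abs_nonneg _) (le_of_lt (lt_of_le_of_lt (abs_nonneg _) hproj))
      _ = 2 * t := by ring
  · have heq2 : (p.2 : ℝ) - pr * u 1 = d 1 - (pr - c) * u 1 := by rw [hd1]; ring
    rw [heq2]
    calc |d 1 - (pr - c) * u 1| ≤ |d 1| + |(pr - c) * u 1| := abs_sub _ _
      _ ≤ t + t * 1 := by
          refine add_le_add habs1.le ?_
          rw [abs_mul]
          exact mul_le_mul hproj.le hu1 (abs_nonneg _) (le_of_lt (lt_of_le_of_lt (abs_nonneg _) hproj))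
      _ = 2 * t := by ring

lemma latticePts_segNbhd_finite {u : R2} (hu : ‖u‖ = 1) (s t : ℝ) :
    (latticePts (segNbhd u s t)).Finite := by
  set M : ℤ := ⌈|s| + |t|⌉
  apply Set.Finite.subset (Set.finite_Icc ((-M, -M) : ℤ × ℤ) (M, M))
  intro p hp
  obtain ⟨w, hw, hd⟩ := hp
  rw [segment_eq_image'] at hw
  obtain ⟨θ, hθ, rfl⟩ := hw
  simp only [zero_add, sub_zero, smul_smul] at hd
  have hwn : ‖(θ * s) • u‖ ≤ |s| := by
    rw [norm_smul, hu, mul_one, Real.norm_eq_abs, abs_mul]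
    calc |θ| * |s| ≤ 1 * |s| := by
          apply mul_le_mul_of_nonneg_right _ (abs_nonneg s)
          rw [abs_of_nonneg hθ.1]; exact hθ.2
      _ = |s| := one_mul _
  have hnp : ‖toR2 p‖ ≤ |s| + |t| := by
    calc ‖toR2 p‖ ≤ ‖(θ * s) • u‖ + ‖toR2 p - (θ * s) • u‖ := norm_le_insert' _ _
      _ ≤ |s| + |t| := by
          refine add_le_add hwn ?_
          rw [← dist_eq_norm]
          exact hd.le.trans (le_abs_self t)
  have h1 : |(p.1 : ℝ)| ≤ |s| + |t| := by
    have := coord_le_norm (toR2 p) 0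
    rw [toR2_apply0] at this
    exact this.trans hnp
  have h2 : |(p.2 : ℝ)| ≤ |s| + |t| := by
    have := coord_le_norm (toR2 p) 1
    rw [toR2_apply1] at this
    exact this.trans hnp
  have hM : |s| + |t| ≤ (M : ℝ) := Int.le_ceil _
  constructor
  · constructor
    · have : -(M : ℝ) ≤ (p.1 : ℝ) := by have := abs_le.1 h1; linarith
      exact_mod_cast this
    · have : -(M : ℝ) ≤ (p.2 : ℝ) := by have := abs_le.1 h2; linarith
      exact_mod_cast this
  · constructor
    · have : (p.1 : ℝ) ≤ (M : ℝ) := by have := abs_le.1 h1; linarith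
      exact_mod_cast this
    · have : (p.2 : ℝ) ≤ (M : ℝ) := by have := abs_le.1 h2; linarith
      exact_mod_cast this

lemma one_le_Pc {u : R2} (hu : ‖u‖ = 1) (s t : ℝ) : 1 ≤ Pc η (segNbhd u s t) :=
  one_le_colorCount η (latticePts_segNbhd_finite hu s t)

end Stmt6Aux

section Stmt6Main

variable {A : Type*} [Fintype A] (η : ℤ × ℤ → A)

lemma log_Pc_le {u : R2} (hu : ‖u‖ = 1) {t : ℝ} (ht : 0 < t) {n k : ℕ}
    (hP : Prect η n k ≤ n * k)
    (hsize : 8 * (t + 1) ≤ (min n k : ℝ)) {s : ℝ} (hs : 0 ≤ s) :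
    Real.log (Pc η (segNbhd u s t)) ≤
      ((s + 2 * t) / (((min n k : ℝ) - 4 * t - 1) / 2) + 2) * Real.log (n * k) := by
  set m : ℝ := (min n k : ℝ) with hm
  set δ : ℝ := (m - 4 * t - 1) / 2 with hδ
  have hδpos : 0 < δ := by rw [hδ]; linarith
  have hmn : m ≤ (n : ℝ) := by
    rw [hm]; exact_mod_cast Nat.cast_le.mpr (Nat.min_le_left n k)
  have hmk : m ≤ (k : ℝ) := by
    rw [hm]; exact_mod_cast Nat.cast_le.mpr (Nat.min_le_right n k)
  have h2δn : 2 * δ + 4 * t < (n : ℝ) := by rw [hδ]; linarith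
  have h2δk : 2 * δ + 4 * t < (k : ℝ) := by rw [hδ]; linarith
  have hn1 : 1 ≤ (n : ℝ) := by linarith
  have hk1 : 1 ≤ (k : ℝ) := by linarith
  have hnk1 : 1 ≤ ((n * k : ℕ) : ℝ) := by push_cast; nlinarith
  have hu0 : |u 0| ≤ 1 := by rw [← hu]; exact coord_le_norm u 0
  have hu1 : |u 1| ≤ 1 := by rw [← hu]; exact coord_le_norm u 1
  set pr : ℤ × ℤ → ℝ := fun p => (p.1 : ℝ) * u 0 + (p.2 : ℝ) * u 1 with hpr
  set L : Set (ℤ × ℤ) := latticePts (segNbhd u s t) with hL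
  set R₀ : Set (ℤ × ℤ) := {p : ℤ × ℤ | 0 ≤ p.1 ∧ p.1 < (n : ℤ) ∧ 0 ≤ p.2 ∧ p.2 < (k : ℤ)}
    with hR₀
  set jv : ℤ → ℤ × ℤ := fun w =>
    (⌈(w : ℝ) * δ * u 0 - (δ + 2 * t)⌉, ⌈(w : ℝ) * δ * u 1 - (δ + 2 * t)⌉) with hjv
  set G : ℤ → Set (ℤ × ℤ) := fun w => {p | p ∈ L ∧ ⌊pr p / δ⌋ = w} with hG
  have hR₀fin : R₀.Finite := by
    apply Set.Finite.subset (Set.finite_Icc ((0, 0) : ℤ × ℤ) ((n : ℤ), (k : ℤ)))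
    rintro p ⟨h1, h2, h3, h4⟩
    exact ⟨⟨h1, h3⟩, ⟨h2.le, h4.le⟩⟩
  have hGsub : ∀ w : ℤ, G w ⊆ (fun x => x + jv w) '' R₀ := by
    rintro w p ⟨hpL, hpw⟩
    obtain ⟨hf1, hf2, hf3, hf4⟩ := strip_facts hu hs hpL
    have hfl1 : (w : ℝ) * δ ≤ pr p := by
      have := Int.floor_le (pr p / δ)
      rw [hpw] at this
      calc (w : ℝ) * δ ≤ (pr p / δ) * δ := by
            apply mul_le_mul_of_nonneg_right this hδpos.le
        _ = pr p := by field_simp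
    have hfl2 : pr p < (w : ℝ) * δ + δ := by
      have := Int.lt_floor_add_one (pr p / δ)
      rw [hpw] at this
      have := (div_lt_iff₀ hδpos).1 this
      linarith [this]
    have hc1 : |(p.1 : ℝ) - (w : ℝ) * δ * u 0| ≤ δ + 2 * t := by
      have h2 : |pr p * u 0 - (w : ℝ) * δ * u 0| ≤ δ := by
        rw [← sub_mul, abs_mul]
        calc |pr p - (w : ℝ) * δ| * |u 0| ≤ δ * 1 := by
              apply mul_le_mul _ hu0 (abs_nonneg _) hδpos.le
              rw [abs_le]; constructor <;> linarith
          _ = δ := mul_one δ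
      calc |(p.1 : ℝ) - (w : ℝ) * δ * u 0| ≤
            |(p.1 : ℝ) - pr p * u 0| + |pr p * u 0 - (w : ℝ) * δ * u 0| := abs_sub_le _ _ _
        _ ≤ 2 * t + δ := add_le_add hf3 h2
        _ = δ + 2 * t := by ring
    have hc2 : |(p.2 : ℝ) - (w : ℝ) * δ * u 1| ≤ δ + 2 * t := by
      have h2 : |pr p * u 1 - (w : ℝ) * δ * u 1| ≤ δ := by
        rw [← sub_mul, abs_mul]
        calc |pr p - (w : ℝ) * δ| * |u 1| ≤ δ * 1 := by
              apply mul_le_mul _ hu1 (abs_nonneg _) hδpos.le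
              rw [abs_le]; constructor <;> linarith
          _ = δ := mul_one δ
      calc |(p.2 : ℝ) - (w : ℝ) * δ * u 1| ≤
            |(p.2 : ℝ) - pr p * u 1| + |pr p * u 1 - (w : ℝ) * δ * u 1| := abs_sub_le _ _ _
        _ ≤ 2 * t + δ := add_le_add hf4 h2
        _ = δ + 2 * t := by ring
    have hj1le : ((jv w).1 : ℝ) ≤ (p.1 : ℝ) := by
      have : ((⌈(w : ℝ) * δ * u 0 - (δ + 2 * t)⌉ : ℤ) : ℝ) ≤ (p.1 : ℝ) := by
        have h := abs_le.1 hc1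
        exact_mod_cast Int.ceil_le.mpr (by linarith [h.1])
      exact this
    have hj1lt : (p.1 : ℝ) - ((jv w).1 : ℝ) < (n : ℝ) := by
      have hle := Int.le_ceil ((w : ℝ) * δ * u 0 - (δ + 2 * t))
      have h := abs_le.1 hc1
      have : (p.1 : ℝ) - ((jv w).1 : ℝ) ≤ 2 * δ + 4 * t := by
        simp only [hjv]
        push_cast
        linarith [h.2, hle]
      linarith
    have hj2le : ((jv w).2 : ℝ) ≤ (p.2 : ℝ) := by
      have : ((⌈(w : ℝ) * δ * u 1 - (δ + 2 * t)⌉ : ℤ) : ℝ) ≤ (p.2 : ℝ) := by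
        have h := abs_le.1 hc2
        exact_mod_cast Int.ceil_le.mpr (by linarith [h.1])
      exact this
    have hj2lt : (p.2 : ℝ) - ((jv w).2 : ℝ) < (k : ℝ) := by
      have hle := Int.le_ceil ((w : ℝ) * δ * u 1 - (δ + 2 * t))
      have h := abs_le.1 hc2
      have : (p.2 : ℝ) - ((jv w).2 : ℝ) ≤ 2 * δ + 4 * t := by
        simp only [hjv]
        push_cast
        linarith [h.2, hle]
      linarith
    refine ⟨p - jv w, ⟨?_, ?_, ?_, ?_⟩, by simp⟩
    · have : ((jv w).1 : ℝ) ≤ (p.1 : ℝ) := hj1le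
      have : (jv w).1 ≤ p.1 := by exact_mod_cast this
      simpa using this
    · have : ((p.1 - (jv w).1 : ℤ) : ℝ) < (n : ℝ) := by push_cast; linarith [hj1lt]
      exact_mod_cast this
    · have : (jv w).2 ≤ p.2 := by exact_mod_cast hj2le
      simpa using this
    · have : ((p.2 - (jv w).2 : ℤ) : ℝ) < (k : ℝ) := by push_cast; linarith [hj2lt]
      exact_mod_cast this
  have hGfin : ∀ w : ℤ, (G w).Finite := fun w => (hR₀fin.image _).subset (hGsub w)
  set a : ℤ := ⌊-t / δ⌋ with ha
  set b : ℤ := ⌊(s + t) / δ⌋ with hb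
  have hLsub : L ⊆ ⋃ w ∈ Finset.Icc a b, G w := by
    intro p hp
    obtain ⟨hf1, hf2, _, _⟩ := strip_facts hu hs hp
    have hwa : a ≤ ⌊pr p / δ⌋ := by
      apply Int.floor_le_floor
      exact (div_le_div_iff_of_pos_right hδpos).mpr hf1
    have hwb : ⌊pr p / δ⌋ ≤ b := by
      apply Int.floor_le_floor
      exact (div_le_div_iff_of_pos_right hδpos).mpr hf2
    simp only [Set.mem_iUnion]
    exact ⟨⌊pr p / δ⌋, Finset.mem_Icc.mpr ⟨hwa, hwb⟩, hp, rfl⟩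
  have hcard : Pc η (segNbhd u s t) ≤ (n * k) ^ (Finset.Icc a b).card := by
    calc Pc η (segNbhd u s t) = colorCount η L := rfl
      _ ≤ colorCount η (⋃ w ∈ Finset.Icc a b, G w) :=
          colorCount_mono η hLsub
            (Set.Finite.biUnion (Finset.Icc a b).finite_toSet fun w _ => hGfin w)
      _ ≤ (n * k) ^ (Finset.Icc a b).card := by
          apply colorCount_biUnion_le η _ G hGfin
          intro w _
          calc colorCount η (G w) ≤ colorCount η ((fun x => x + jv w) '' R₀) :=
                colorCount_mono η (hGsub w) (hR₀fin.image _)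
            _ ≤ colorCount η R₀ := colorCount_translate_le η R₀ (jv w) hR₀fin
            _ = Prect η n k := rfl
            _ ≤ n * k := hP
  have hab : a ≤ b := by
    apply Int.floor_le_floor
    exact (div_le_div_iff_of_pos_right hδpos).mpr (by linarith)
  have hcardR : ((Finset.Icc a b).card : ℝ) ≤ (s + 2 * t) / δ + 2 := by
    rw [Int.card_Icc]
    have hz : (0 : ℤ) ≤ b + 1 - a := by omega
    have : (((b + 1 - a).toNat : ℤ) : ℝ) = ((b : ℝ) + 1 - (a : ℝ)) := by
      rw [Int.toNat_of_nonneg hz]; push_cast; ring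
    rw [show (((b + 1 - a).toNat : ℕ) : ℝ) = (((b + 1 - a).toNat : ℤ) : ℝ) by push_cast; ring,
      this]
    have hbb : (b : ℝ) ≤ (s + t) / δ := Int.floor_le _
    have haa : -t / δ < (a : ℝ) + 1 := Int.lt_floor_add_one _
    have hsplit : (s + 2 * t) / δ = (s + t) / δ + t / δ := by ring
    rw [hsplit]
    have : -((a : ℝ)) < t / δ + 1 := by
      have : -t / δ = -(t / δ) := by ring
      rw [this] at haa
      linarith
    linarith
  -- final log computation
  have hPc1 : 1 ≤ Pc η (segNbhd u s t) := one_le_Pc η hu s t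
  have hPcR : (1 : ℝ) ≤ (Pc η (segNbhd u s t) : ℝ) := by exact_mod_cast hPc1
  calc Real.log (Pc η (segNbhd u s t)) ≤
        Real.log (((n * k) ^ (Finset.Icc a b).card : ℕ) : ℝ) := by
        apply Real.log_le_log (by linarith)
        exact_mod_cast hcard
    _ = ((Finset.Icc a b).card : ℝ) * Real.log ((n * k : ℕ) : ℝ) := by
        push_cast
        rw [Real.log_pow]
    _ ≤ ((s + 2 * t) / δ + 2) * Real.log ((n * k : ℕ) : ℝ) := by
        apply mul_le_mul_of_nonneg_right hcardR (Real.log_nonneg hnk1)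
    _ = ((s + 2 * t) / (((min n k : ℝ) - 4 * t - 1) / 2) + 2) * Real.log (n * k) := by
        push_cast
        ring

end Stmt6Main

section Stmt6Final

variable {A : Type*} [Fintype A] (η : ℤ × ℤ → A)

lemma limsup_log_Pc_le {u : R2} (hu : ‖u‖ = 1) {t : ℝ} (ht : 0 < t) {n k : ℕ}
    (hP : Prect η n k ≤ n * k) (hsize : 8 * (t + 1) ≤ (min n k : ℝ)) :
    Filter.limsup (fun s : ℝ => ((Real.log (Pc η (segNbhd u s t)) / s : ℝ) : EReal))
      Filter.atTop ≤
      ((Real.log ((n : ℝ) * (k : ℝ)) / (((min n k : ℝ) - 4 * t - 1) / 2) : ℝ) : EReal) := by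
  set δ : ℝ := ((min n k : ℝ) - 4 * t - 1) / 2 with hδ
  have hδpos : 0 < δ := by rw [hδ]; linarith
  set C : ℝ := Real.log ((n : ℝ) * (k : ℝ)) / δ with hC
  set g : ℝ → ℝ := fun s => C + (2 * t / δ + 2) * Real.log ((n : ℝ) * (k : ℝ)) / s with hg
  have htend : Tendsto g atTop (nhds C) := by
    have h0 : Tendsto (fun s : ℝ => (2 * t / δ + 2) * Real.log ((n : ℝ) * (k : ℝ)) / s)
        atTop (nhds 0) := Filter.Tendsto.div_atTop tendsto_const_nhds tendsto_id
    have := (tendsto_const_nhds (x := C)).add h0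
    simpa using this
  have hev : ∀ᶠ s in (atTop : Filter ℝ),
      ((Real.log (Pc η (segNbhd u s t)) / s : ℝ) : EReal) ≤ ((g s : ℝ) : EReal) := by
    filter_upwards [eventually_ge_atTop (1 : ℝ)] with s hs1
    rw [EReal.coe_le_coe_iff]
    have hs0 : (0 : ℝ) < s := by linarith
    have hlog := log_Pc_le η hu ht hP hsize (by linarith : (0:ℝ) ≤ s)
    have hdiv : Real.log (Pc η (segNbhd u s t)) / s ≤
        ((s + 2 * t) / δ + 2) * Real.log ((n : ℝ) * (k : ℝ)) / s := by
      exact (div_le_div_iff_of_pos_right hs0).mpr hlog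
    have heq : ((s + 2 * t) / δ + 2) * Real.log ((n : ℝ) * (k : ℝ)) / s = g s := by
      rw [hg, hC]
      field_simp
      ring
    rw [heq] at hdiv
    exact hdiv
  calc Filter.limsup (fun s : ℝ => ((Real.log (Pc η (segNbhd u s t)) / s : ℝ) : EReal)) atTop
      ≤ Filter.limsup (fun s : ℝ => ((g s : ℝ) : EReal)) atTop := Filter.limsup_le_limsup hev
    _ = ((C : ℝ) : EReal) := (EReal.tendsto_coe.mpr htend).limsup_eq

end Stmt6Final

/-- subexponential eccentricity gives zero directional entropy in all directions. -/
theorem stmt6 {A : Type*} [Fintype A] (η : ℤ × ℤ → A) (n k : ℕ → ℕ)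
    (hn : ∀ i, 0 < n i) (hk : ∀ i, 0 < k i)
    (hntop : Filter.Tendsto n Filter.atTop Filter.atTop)
    (hktop : Filter.Tendsto k Filter.atTop Filter.atTop)
    (hP : ∀ i, Prect η (n i) (k i) ≤ n i * k i)
    (h1 : Filter.Tendsto (fun i => Real.log (n i) / (k i : ℝ)) Filter.atTop (nhds 0))
    (h2 : Filter.Tendsto (fun i => Real.log (k i) / (n i : ℝ)) Filter.atTop (nhds 0)) :
    ∀ u : R2, ‖u‖ = 1 → dirEnt η u = 0 := by
  intro u hu
  have hNcast : Tendsto (fun i => ((n i : ℕ) : ℝ)) atTop atTop :=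
    tendsto_natCast_atTop_atTop.comp hntop
  have hKcast : Tendsto (fun i => ((k i : ℕ) : ℝ)) atTop atTop :=
    tendsto_natCast_atTop_atTop.comp hktop
  have hlogn : Tendsto (fun i => Real.log (n i) / (n i : ℝ)) atTop (nhds 0) :=
    Real.isLittleO_log_id_atTop.tendsto_div_nhds_zero.comp hNcast
  have hlogk : Tendsto (fun i => Real.log (k i) / (k i : ℝ)) atTop (nhds 0) :=
    Real.isLittleO_log_id_atTop.tendsto_div_nhds_zero.comp hKcast
  apply le_antisymm
  · -- upper bound
    rw [dirEnt]
    apply iSup_le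
    rintro ⟨t, ht⟩
    have ht' : (0 : ℝ) < t := ht
    set K : ℕ → ℝ := fun i =>
      Real.log ((n i : ℝ) * (k i : ℝ)) / (((min (n i : ℝ) (k i : ℝ)) - 4 * t - 1) / 2) with hK
    -- eventual size condition
    have hsize : ∀ᶠ i in atTop, 8 * (t + 1) ≤ min ((n i : ℝ)) ((k i : ℝ)) := by
      filter_upwards [hNcast.eventually_ge_atTop (8 * (t + 1)),
        hKcast.eventually_ge_atTop (8 * (t + 1))] with i hni hki
      exact le_min hni hki
    have hEv : ∀ᶠ i in atTop,
        Filter.limsup (fun s : ℝ =>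
          ((Real.log (Pc η (segNbhd u s (t : ℝ))) / s : ℝ) : EReal)) Filter.atTop
          ≤ ((K i : ℝ) : EReal) := by
      filter_upwards [hsize] with i hi
      exact limsup_log_Pc_le η hu ht' (hP i) hi
    -- K tends to zero
    have hKto : Tendsto K atTop (nhds 0) := by
      set D : ℕ → ℝ := fun i => 4 * (Real.log (n i) / (n i : ℝ) + Real.log (n i) / (k i : ℝ) +
        Real.log (k i) / (n i : ℝ) + Real.log (k i) / (k i : ℝ)) with hD
      have hDto : Tendsto D atTop (nhds 0) := by
        have := (((hlogn.add h1).add h2).add hlogk).const_mul (4 : ℝ)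
        simpa [hD] using this
      apply squeeze_zero' ?_ ?_ hDto
      · filter_upwards [hsize, hNcast.eventually_ge_atTop 1, hKcast.eventually_ge_atTop 1]
          with i hi hni hki
        have hm : (8 : ℝ) * (t + 1) ≤ min ((n i : ℝ)) ((k i : ℝ)) := hi
        have hδpos : (0 : ℝ) < (min ((n i : ℝ)) ((k i : ℝ)) - 4 * t - 1) / 2 := by
          have := le_min_iff.1 hm
          rcases min_cases ((n i : ℝ)) ((k i : ℝ)) with ⟨h, _⟩ | ⟨h, _⟩ <;> rw [h] <;> linarith
        apply div_nonneg _ hδpos.le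
        apply Real.log_nonneg
        nlinarith
      · filter_upwards [hsize, hNcast.eventually_ge_atTop 1, hKcast.eventually_ge_atTop 1]
          with i hi hni hki
        set N := ((n i : ℕ) : ℝ)
        set Kr := ((k i : ℕ) : ℝ)
        have hm : (8 : ℝ) * (t + 1) ≤ min N Kr := hi
        have hmn : min N Kr ≤ N := min_le_left _ _
        have hmk : min N Kr ≤ Kr := min_le_right _ _
        have hNpos : (0 : ℝ) < N := by linarith
        have hKpos : (0 : ℝ) < Kr := by linarith
        have hLn : 0 ≤ Real.log N := Real.log_nonneg hni
        have hLk : 0 ≤ Real.log Kr := Real.log_nonneg hki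
        have hlogmul : Real.log (N * Kr) = Real.log N + Real.log Kr :=
          Real.log_mul (by linarith) (by linarith)
        have hδm : min N Kr / 4 ≤ (min N Kr - 4 * t - 1) / 2 := by
          have := le_min_iff.1 hm
          rcases min_cases N Kr with ⟨h, _⟩ | ⟨h, _⟩ <;> rw [h] <;> linarith
        have hδpos : (0 : ℝ) < min N Kr / 4 := by
          have := le_min_iff.1 hm
          rcases min_cases N Kr with ⟨h, _⟩ | ⟨h, _⟩ <;> rw [h] <;> linarith
        have step1 : K i ≤ (Real.log N + Real.log Kr) / (min N Kr / 4) := by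
          rw [hK]
          simp only [← hlogmul]
          exact div_le_div_of_nonneg_left (by rw [hlogmul]; linarith) hδpos hδm
        have step2 : (Real.log N + Real.log Kr) / (min N Kr / 4) ≤ D i := by
          rcases min_cases N Kr with ⟨h, _⟩ | ⟨h, _⟩ <;> rw [h]
          · have e1 : (Real.log N + Real.log Kr) / (N / 4) =
                4 * (Real.log N / N + Real.log Kr / N) := by field_simp
            rw [e1, hD]
            have : 0 ≤ Real.log N / Kr := div_nonneg hLn hKpos.le
            have : 0 ≤ Real.log Kr / Kr := div_nonneg hLk hKpos.le
            nlinarith [div_nonneg hLn hKpos.le, div_nonneg hLk hKpos.le]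
          · have e1 : (Real.log N + Real.log Kr) / (Kr / 4) =
                4 * (Real.log N / Kr + Real.log Kr / Kr) := by field_simp
            rw [e1, hD]
            nlinarith [div_nonneg hLn hNpos.le, div_nonneg hLk hNpos.le]
        linarith
    have hcoe : Tendsto (fun i => ((K i : ℝ) : EReal)) atTop (nhds (0 : EReal)) := by
      have := EReal.tendsto_coe.mpr hKto
      simpa using this
    exact ge_of_tendsto hcoe hEv
  · -- lower bound
    rw [dirEnt]
    have hlim : (0 : EReal) ≤ Filter.limsup (fun s : ℝ =>
        ((Real.log (Pc η (segNbhd u s ((1 : ℝ)))) / s : ℝ) : EReal)) Filter.atTop := by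
      have hev : ∀ᶠ s in (atTop : Filter ℝ), ((0 : ℝ) : EReal) ≤
          ((Real.log (Pc η (segNbhd u s (1 : ℝ))) / s : ℝ) : EReal) := by
        filter_upwards [eventually_ge_atTop (1 : ℝ)] with s hs1
        rw [EReal.coe_le_coe_iff]
        apply div_nonneg _ (by linarith)
        apply Real.log_nonneg
        exact_mod_cast one_le_Pc η hu s 1
      calc (0 : EReal) = Filter.limsup (fun _ : ℝ => ((0 : ℝ) : EReal)) Filter.atTop := by
            simp [Filter.limsup_const]
        _ ≤ _ := Filter.limsup_le_limsup hev
    exact le_trans hlim (le_iSup (fun t : Set.Ioi (0:ℝ) =>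
      Filter.limsup (fun s : ℝ => ((Real.log (Pc η (segNbhd u s (t : ℝ))) / s : ℝ) : EReal))
        Filter.atTop) ⟨1, by norm_num⟩)
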